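/- For u = y(αx+βy)/(βx+αy) and v = x(αx+βy)/(βx+αy), the Jacobian determinant of (u,v) with respect to (x,y) equals −((αx+βy)/(βx+αy))² = −uv/(xy). -/

import Mathlib

/-- First component of the Yang–Baxter map. -/
noncomputable def ufun (α β x y : ℝ) : ℝ := y * (α * x + β * y) / (β * x + α * y)

/-- Second component of the Yang–Baxter map. -/
noncomputable def vfun (α β x y : ℝ) : ℝ := x * (α * x + β * y) / (β * x + α * y)

/-- The Jacobian determinant of `(u,v)` with respect to `(x,y)` equals
`−((αx+βy)/(βx+αy))² = −uv/(xy)`. -/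
theorem collision_jacobian (α β x y : ℝ)
    (hα : 0 < α) (hβ : 0 < β) (hx : 0 < x) (hy : 0 < y) :
    deriv (fun t => ufun α β t y) x * deriv (fun t => vfun α β x t) y -
      deriv (fun t => ufun α β x t) y * deriv (fun t => vfun α β t y) x =
    -((α * x + β * y) / (β * x + α * y)) ^ 2 ∧
    -((α * x + β * y) / (β * x + α * y)) ^ 2 =
      -(ufun α β x y * vfun α β x y) / (x * y) := by
  have hD : β * x + α * y ≠ 0 := by positivity
  have h1 : HasDerivAt (fun t => ufun α β t y)
      ((y * α * (β * x + α * y) - y * (α * x + β * y) * β) / (β * x + α * y) ^ 2) x := by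
    simpa [ufun, Pi.div_def, mul_comm, mul_assoc, mul_left_comm] using
      ((((hasDerivAt_id x).const_mul α).add_const (β * y)).const_mul y).div
        (((hasDerivAt_id x).const_mul β).add_const (α * y)) hD
  have h2 : HasDerivAt (fun t => vfun α β x t)
      ((x * β * (β * x + α * y) - x * (α * x + β * y) * α) / (β * x + α * y) ^ 2) y := by
    simpa [vfun, Pi.div_def, mul_comm, mul_assoc, mul_left_comm] using
      ((((hasDerivAt_id y).const_mul β).const_add (α * x)).const_mul x).div
        (((hasDerivAt_id y).const_mul α).const_add (β * x)) hD
  have h3 : HasDerivAt (fun t => ufun α β x t)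
      (((α * x + 2 * β * y) * (β * x + α * y) - y * (α * x + β * y) * α) /
        (β * x + α * y) ^ 2) y := by
    have hnum : HasDerivAt (fun t : ℝ => t * (α * x + β * t)) (α * x + 2 * β * y) y := by
      have := (hasDerivAt_id y).mul (((hasDerivAt_id y).const_mul β).const_add (α * x))
      simpa [Pi.mul_def] using this.congr_deriv (by simp only [id_eq]; ring)
    simpa [ufun, Pi.div_def] using hnum.div
      (((hasDerivAt_id y).const_mul α).const_add (β * x)) hD
  have h4 : HasDerivAt (fun t => vfun α β t y)
      (((2 * α * x + β * y) * (β * x + α * y) - x * (α * x + β * y) * β) /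
        (β * x + α * y) ^ 2) x := by
    have hnum : HasDerivAt (fun t : ℝ => t * (α * t + β * y)) (2 * α * x + β * y) x := by
      have := (hasDerivAt_id x).mul (((hasDerivAt_id x).const_mul α).add_const (β * y))
      simpa [Pi.mul_def] using this.congr_deriv (by simp only [id_eq]; ring)
    simpa [vfun, Pi.div_def] using hnum.div
      (((hasDerivAt_id x).const_mul β).add_const (α * y)) hD
  rw [h1.deriv, h2.deriv, h3.deriv, h4.deriv]
  constructor
  · field_simp
    ring
  · rw [ufun, vfun]
    field_simp
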